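/- Let β > 0, γ > 0 and κ > 1 be real numbers with β(κ−1) > γ, and let x* = κ(β(κ−1) − γ)/(βκ(κ−1) − γ), y* = γ(β(κ−1) − γ)/(β(βκ(κ−1) − γ)) be the endemic steady state of the MF2 system. Then 0 < x* < 1 and the steady-state nearest-neighbour correlations satisfy: C_II := (x* − y*)/(x*)² = (βκ − γ)(βκ(κ−1) − γ)/(βκ²(β(κ−1) − γ)), C_SI := y*/(x*(1 − x*)) = 1 − γ/(βκ(κ−1)), and C_SS := (1 − x* − y*)/(1 − x*)² = (βκ(κ−1) − γ)/(β(κ−1)²). -/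

import Mathlib

/-- MF2 steady-state nearest-neighbour correlations for SIS spreading on a
degree-homogeneous network: the endemic state satisfies `0 < x* < 1` and the
correlations `C_II`, `C_SI`, `C_SS` take the stated closed forms. -/
theorem mf2_steady_state_correlations (β γ κ : ℝ) (hβ : 0 < β) (hγ : 0 < γ) (hκ : 1 < κ)
    (hthr : γ < β * (κ - 1))
    (xs ys : ℝ)
    (hxs : xs = κ * (β * (κ - 1) - γ) / (β * κ * (κ - 1) - γ))
    (hys : ys = γ * (β * (κ - 1) - γ) / (β * (β * κ * (κ - 1) - γ))) :
    (0 < xs ∧ xs < 1) ∧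
    (xs - ys) / xs ^ 2
      = (β * κ - γ) * (β * κ * (κ - 1) - γ) / (β * κ ^ 2 * (β * (κ - 1) - γ)) ∧
    ys / (xs * (1 - xs)) = 1 - γ / (β * κ * (κ - 1)) ∧
    (1 - xs - ys) / (1 - xs) ^ 2 = (β * κ * (κ - 1) - γ) / (β * (κ - 1) ^ 2) := by
  have hκ0 : 0 < κ := lt_trans one_pos hκ
  have hκ1 : 0 < κ - 1 := by linarith
  have hN : 0 < β * (κ - 1) - γ := by linarith
  have hD : 0 < β * κ * (κ - 1) - γ := by nlinarith
  have hD' : (β * κ * (κ - 1) - γ) ≠ 0 := ne_of_gt hD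
  have hβ' : β ≠ 0 := ne_of_gt hβ
  have hN' : (β * (κ - 1) - γ) ≠ 0 := ne_of_gt hN
  have hκ' : κ ≠ 0 := ne_of_gt hκ0
  have hκ1' : κ - 1 ≠ 0 := ne_of_gt hκ1
  have hγβκ : 0 < β * κ - γ := by nlinarith
  have hxpos : 0 < xs := by
    rw [hxs]; positivity
  have hx1 : xs < 1 := by
    rw [hxs, div_lt_one hD]; nlinarith
  have h1x : 1 - xs = γ * (κ - 1) / (β * κ * (κ - 1) - γ) := by
    rw [hxs, eq_div_iff hD', sub_mul, div_mul_cancel₀ _ hD']; ring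
  refine ⟨⟨hxpos, hx1⟩, ?_, ?_, ?_⟩
  · rw [hxs, hys]
    rw [div_eq_div_iff (by positivity) (by positivity)]
    field_simp
  · rw [hys, h1x, hxs]
    rw [div_eq_iff (by positivity)]
    field_simp
  · rw [hys, h1x]
    rw [div_eq_div_iff (by positivity) (by positivity)]
    field_simp
    ring
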